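/- For a simplicial set X the following two conditions are equivalent: (i) for every n ≥ 3 and all pairs 0 ≤ i < j ≤ n, the map X_n → X_{{0,…,i}∪{j,…,n}} ×_{X_{{i,j}}} X_{{i,…,j}} is a bijection; (ii) the same maps are bijections for every n ≥ 3 and those pairs 0 ≤ i < j ≤ n with i = 0 or j = n. -/

import Mathlib

open CategoryTheory Simplicial

universe u

namespace Seg

/-- Restriction of a simplex along a monotone map of standard simplices. -/
def res (X : SSet.{u}) {m n : ℕ} (f : Fin (m + 1) →o Fin (n + 1)) : X _⦋n⦌ → X _⦋m⦌ :=
  X.map (SimplexCategory.mkHom f).op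

/-- The monotone injection `[l] → [n]`, `k ↦ i + k`, i.e. the inclusion of the
interval `{i, i+1, …, i+l}` into `{0, …, n}`. -/
def interval {n : ℕ} (i l : ℕ) (h : i + l ≤ n) : Fin (l + 1) →o Fin (n + 1) where
  toFun k := ⟨i + k.1, by have := k.isLt; omega⟩
  monotone' := by
    intro a b hab
    have h' : a.1 ≤ b.1 := hab
    simp only [Fin.mk_le_mk]
    omega

/-- The monotone injection with image `{0,…,i} ∪ {j,…,n}` (where `i < j ≤ n`). -/
def outer {n : ℕ} (i j : ℕ) (hij : i < j) (hj : j ≤ n) :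
    Fin (n - (j - i) + 2) →o Fin (n + 1) where
  toFun k := ⟨if k.1 ≤ i then k.1 else k.1 + (j - i) - 1, by have := k.isLt; split <;> omega⟩
  monotone' := by
    intro a b hab
    have h' : a.1 ≤ b.1 := hab
    have ha := a.isLt
    have hb := b.isLt
    simp only [Fin.mk_le_mk]
    split_ifs <;> omega

/-- The monotone map `[1] → [l]` sending `0 ↦ 0` and `1 ↦ l`. -/
def ends (l : ℕ) : Fin 2 →o Fin (l + 1) where
  toFun k := ⟨k.1 * l, by
    have hk : k.1 ≤ 1 := Nat.lt_succ_iff.mp k.isLt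
    have h2 : k.1 * l ≤ 1 * l := Nat.mul_le_mul hk (le_refl l)
    omega⟩
  monotone' := by
    intro a b hab
    have h' : a.1 ≤ b.1 := hab
    simp only [Fin.mk_le_mk]
    exact Nat.mul_le_mul h' (le_refl l)

/-- The map `[0] → [n]` picking out the vertex `i`. -/
def vert {n : ℕ} (i : ℕ) (h : i ≤ n) : Fin 1 →o Fin (n + 1) where
  toFun _ := ⟨i, by omega⟩
  monotone' := fun _ _ _ => le_refl _

/-- The monotone surjection `[m+1] → [m]` hitting `i` twice; restriction along it is the
degeneracy `s_i : X_m → X_{m+1}`. -/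
def degen {m : ℕ} (i : ℕ) (h : i ≤ m) : Fin (m + 2) →o Fin (m + 1) where
  toFun k := ⟨if k.1 ≤ i then k.1 else k.1 - 1, by have := k.isLt; split <;> omega⟩
  monotone' := by
    intro a b hab
    have h' : a.1 ≤ b.1 := hab
    simp only [Fin.mk_le_mk]
    split_ifs <;> omega

/-- The 2-Segal map associated to `0 ≤ i < j ≤ n`, i.e. the canonical map
`X_n → X_{{0,…,i}∪{j,…,n}} ×_{X_{{i,j}}} X_{{i,…,j}}`, is a bijection.  (A map into a
fiber product of sets is a bijection iff every compatible pair has a unique preimage.) -/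
def TwoSegalMapBij (X : SSet.{u}) (n i j : ℕ) (hij : i < j) (hj : j ≤ n) : Prop :=
  ∀ (a : X _⦋n - (j - i) + 1⦌) (b : X _⦋j - i⦌),
    res X (interval i 1 (by omega)) a = res X (ends (j - i)) b →
    ∃! x : X _⦋n⦌,
      res X (outer i j hij hj) x = a ∧ res X (interval i (j - i) (by omega)) x = b

/-- A simplicial set is 2-Segal if all the 2-Segal maps are bijections. -/
def IsTwoSegal (X : SSet.{u}) : Prop :=
  ∀ (n i j : ℕ), 3 ≤ n → ∀ (hij : i < j) (hj : j ≤ n), TwoSegalMapBij X n i j hij hj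

/-- A simplicial set is Segal (1-Segal) if for each `n ≥ 2` the map
`X_n → X_1 ×_{X_0} ⋯ ×_{X_0} X_1` (restriction to the edges `{k,k+1}`) is a bijection. -/
def IsSegal (X : SSet.{u}) : Prop :=
  ∀ (n : ℕ), 2 ≤ n → ∀ e : Fin n → X _⦋1⦌,
    (∀ (k : ℕ) (hk : k + 1 < n),
      res X (vert 1 (le_refl 1)) (e ⟨k, by omega⟩) =
        res X (vert 0 (Nat.zero_le 1)) (e ⟨k + 1, hk⟩)) →
    ∃! x : X _⦋n⦌, ∀ k : Fin n, res X (interval k.1 1 (by have := k.isLt; omega)) x = e k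

end Seg

namespace Seg

lemma res_res (X : SSet.{u}) {l m n : ℕ} (f : Fin (m+1) →o Fin (l+1))
    (g : Fin (l+1) →o Fin (n+1)) (x : X _⦋n⦌) :
    res X f (res X g x) = res X (g.comp f) x := by
  simp only [res, ← FunctorToTypes.map_comp_apply]
  rfl

lemma res_id (X : SSet.{u}) {n : ℕ} (x : X _⦋n⦌) :
    res X (OrderHom.id : Fin (n+1) →o Fin (n+1)) x = x := by
  have h : SimplexCategory.mkHom (OrderHom.id : Fin (n+1) →o Fin (n+1)) = 𝟙 _ := rfl
  simp only [res, h, op_id, FunctorToTypes.map_id_apply]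

lemma res_congr (X : SSet.{u}) {m n : ℕ} {f f' : Fin (m+1) →o Fin (n+1)} (h : f = f')
    (x : X _⦋n⦌) : res X f x = res X f' x := by rw [h]

def mk2 {m n : ℕ} (f : ℕ → ℕ) (hmono : ∀ a b : ℕ, a ≤ b → f a ≤ f b)
    (hbd : ∀ k, k ≤ m → f k ≤ n) : Fin (m+1) →o Fin (n+1) where
  toFun k := ⟨f k.1, by have := k.isLt; have := hbd k.1 (by omega); omega⟩
  monotone' := by
    intro a b hab
    simp only [Fin.mk_le_mk]
    exact hmono a.1 b.1 hab

end Seg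

namespace Seg

set_option maxHeartbeats 4000000 in
/-- For a simplicial set `X`, the 2-Segal maps for all pairs `0 ≤ i < j ≤ n` (with `n ≥ 3`)
are bijections iff this holds for those pairs with `i = 0` or `j = n`. -/
theorem twoSegal_iff_special_pairs (X : SSet.{u}) :
    (∀ (n i j : ℕ), 3 ≤ n → ∀ (hij : i < j) (hj : j ≤ n), TwoSegalMapBij X n i j hij hj) ↔
      (∀ (n i j : ℕ), 3 ≤ n → ∀ (hij : i < j) (hj : j ≤ n), (i = 0 ∨ j = n) →
        TwoSegalMapBij X n i j hij hj) := by
  constructor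
  · intro H n i j h3 hij hj _
    exact H n i j h3 hij hj
  · intro H n i j h3 hij hj
    by_cases hsp : i = 0 ∨ j = n
    · exact H n i j h3 hij hj hsp
    push_neg at hsp
    have hi : 1 ≤ i := by omega
    have hjn : j + 1 ≤ n := by omega
    by_cases hdeg : j = i + 1
    · subst hdeg
      intro a b hab
      -- the outer map is an isomorphism of posets here
      set ρinv : Fin (n+1) →o Fin (n - (i+1-i) + 1 + 1) :=
        mk2 (fun k => k) (fun _ _ h => h) (fun k hk => by beta_reduce; omega) with hρinv
      set ι' : Fin ((i+1-i)+1) →o Fin 2 :=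
        mk2 (fun k => k) (fun _ _ h => h) (fun k hk => by beta_reduce; omega) with hι'
      have Eid : ρinv.comp (outer i (i+1) hij hj) = OrderHom.id := by
        ext k
        simp [hρinv, mk2, outer, OrderHom.comp, OrderHom.id, DFunLike.coe, -OrderHom.toFun_eq_coe]
      have Eid2 : (outer i (i+1) hij hj).comp ρinv = OrderHom.id := by
        ext k
        simp [hρinv, mk2, outer, OrderHom.comp, OrderHom.id, DFunLike.coe, -OrderHom.toFun_eq_coe]
      have E : ρinv.comp (interval i (i+1-i) (by omega)) =
          (interval i 1 (by omega)).comp ι' := by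
        ext k
        simp [hρinv, hι', mk2, outer, interval, OrderHom.comp, DFunLike.coe, -OrderHom.toFun_eq_coe]
      have E' : (ends (i+1-i)).comp ι' = OrderHom.id := by
        ext k
        have h1 : i + 1 - i = 1 := by omega
        simp [hι', mk2, ends, OrderHom.comp, h1, OrderHom.id, DFunLike.coe, -OrderHom.toFun_eq_coe]
      refine ⟨res X ρinv a, ⟨?_, ?_⟩, ?_⟩
      · rw [res_res, Eid, res_id]
      · rw [res_res, E, ← res_res, hab, res_res, E', res_id]
      · rintro y ⟨hy1, -⟩
        rw [← hy1, res_res, Eid2, res_id]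
    have hij2 : i + 2 ≤ j := by omega
    intro a b hab
    -- the five auxiliary monotone maps
    set g1 : Fin ((n-i)-(j-i)+1+1) →o Fin ((n-(j-i)+1)+1) :=
      mk2 (fun k => i + k) (fun _ _ h => by beta_reduce; omega) (fun k hk => by beta_reduce; omega) with hg1
    set g2 : Fin ((n-(n-i)+1)+1) →o Fin ((n-(j-i)+1)+1) :=
      mk2 (fun k => if k ≤ i then k else n-(j-i)+1)
        (fun _ _ h => by beta_reduce; split_ifs <;> omega)
        (fun k hk => by beta_reduce; split_ifs <;> omega) with hg2
    set rho : Fin ((n-(j-i)+1)-((n-(j-i)+1)-i)+1+1) →o Fin ((n-(n-i)+1)+1) :=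
      mk2 (fun k => k) (fun _ _ h => h) (fun k hk => by beta_reduce; omega) with hrho
    set rho2 : Fin (((n-(j-i)+1)-i)+1) →o Fin (((n-i)-(j-i)+1)+1) :=
      mk2 (fun k => k) (fun _ _ h => h) (fun k hk => by beta_reduce; omega) with hrho2
    set sig : Fin (((n-(j-i)+1)-i)+1) →o Fin ((n-i)+1) :=
      mk2 (fun k => if k = 0 then 0 else k + (j-i) - 1)
        (fun _ _ h => by beta_reduce; split_ifs <;> omega)
        (fun k hk => by beta_reduce; split_ifs <;> omega) with hsig
    -- the composite identities
    have E1 : g1.comp (interval 0 1 (by omega)) = (interval i 1 (by omega) : Fin 2 →o Fin ((n-(j-i)+1)+1)) := by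
      ext k; simp [hg1, mk2, interval, OrderHom.comp, DFunLike.coe, -OrderHom.toFun_eq_coe]
    have E2 : (outer (n := n-i) 0 (j-i) (by omega) (by omega)).comp (ends ((n-i)-(j-i)+1))
        = ends (n-i) := by
      ext k; fin_cases k <;> simp [outer, ends, OrderHom.comp, DFunLike.coe, -OrderHom.toFun_eq_coe] <;> omega
    have E3 : g2.comp (interval i 1 (by omega)) = g1.comp (ends ((n-i)-(j-i)+1)) := by
      ext k; fin_cases k <;>
        simp [hg1, hg2, mk2, interval, ends, OrderHom.comp, DFunLike.coe, -OrderHom.toFun_eq_coe] <;>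
        first | omega | (split_ifs <;> omega)
    have E4 : (interval i (n-i) (by omega)).comp (interval 0 (j-i) (by omega))
        = (interval i (j-i) (by omega) : Fin ((j-i)+1) →o Fin (n+1)) := by
      ext k; simp [interval, OrderHom.comp, DFunLike.coe, -OrderHom.toFun_eq_coe]
    have E5 : (outer i (n-(j-i)+1) (by omega) (le_refl _)).comp (interval i 1 (by omega))
        = (interval i ((n-(j-i)+1)-i) (by omega)).comp (ends ((n-(j-i)+1)-i)) := by
      ext k; fin_cases k <;>
        simp [outer, interval, ends, OrderHom.comp, DFunLike.coe, -OrderHom.toFun_eq_coe] <;> split_ifs <;> omega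
    have E6 : (outer i j hij hj).comp (outer i (n-(j-i)+1) (by omega) (le_refl _))
        = (outer i n (by omega) (le_refl n)).comp rho := by
      ext k; simp [hrho, mk2, outer, OrderHom.comp, Fin.ext_iff, DFunLike.coe, -OrderHom.toFun_eq_coe]; split_ifs <;> omega
    have E7 : g2.comp rho = (outer i (n-(j-i)+1) (by omega) (le_refl _) : Fin ((n-(j-i)+1)-((n-(j-i)+1)-i)+2) →o Fin ((n-(j-i)+1)+1)) := by
      ext k; simp [hrho, hg2, mk2, outer, OrderHom.comp, Fin.ext_iff, DFunLike.coe, -OrderHom.toFun_eq_coe]; split_ifs <;> omega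
    have E8 : (outer i j hij hj).comp (interval i ((n-(j-i)+1)-i) (by omega))
        = (interval i (n-i) (by omega)).comp sig := by
      ext k; simp [hsig, mk2, outer, interval, OrderHom.comp, DFunLike.coe, -Fin.val_eq_zero_iff, -OrderHom.toFun_eq_coe]
      split_ifs <;> omega
    have E9 : sig = (outer (n := n-i) 0 (j-i) (by omega) (by omega)).comp rho2 := by
      ext k; simp [hsig, hrho2, mk2, outer, OrderHom.comp, DFunLike.coe, -Fin.val_eq_zero_iff, -OrderHom.toFun_eq_coe]; split_ifs <;> omega
    have E10 : g1.comp rho2 = (interval i ((n-(j-i)+1)-i) (by omega) : Fin (((n-(j-i)+1)-i)+1) →o Fin ((n-(j-i)+1)+1)) := by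
      ext k; simp [hg1, hrho2, mk2, interval, OrderHom.comp, DFunLike.coe, -OrderHom.toFun_eq_coe]
    have E11 : (outer i j hij hj).comp g2 = (outer i n (by omega) (le_refl n) : Fin (n-(n-i)+2) →o Fin (n+1)) := by
      ext k; simp [hg2, mk2, outer, OrderHom.comp, Fin.ext_iff, DFunLike.coe, -OrderHom.toFun_eq_coe]; split_ifs <;> omega
    have E12 : (interval i (n-i) (by omega)).comp (outer 0 (j-i) (by omega) (by omega))
        = (outer i j hij hj).comp g1 := by
      ext k; simp [hg1, mk2, outer, interval, OrderHom.comp, DFunLike.coe, -OrderHom.toFun_eq_coe]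
      split_ifs <;> omega
    -- the two restrictions of a
    set A := res X g1 a with hA
    set A' := res X g2 a with hA'
    -- apply the special 2-Segal bijection for (0, j-i) in [n-i]
    have S2 := H (n-i) 0 (j-i) (by omega) (by omega) (by omega) (Or.inl rfl)
    unfold TwoSegalMapBij at S2
    have compat1 : res X (interval 0 1 (by omega)) A = res X (ends (j-i)) b := by
      calc res X (interval 0 1 (by omega)) A
          = res X (g1.comp (interval 0 1 (by omega))) a := by rw [hA, res_res]
        _ = res X (interval i 1 (by omega)) a := res_congr X E1 a
        _ = res X (ends (j-i)) b := hab
    obtain ⟨c, ⟨hc1, hc2⟩, hcu⟩ := S2 A b compat1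
    -- apply the special 2-Segal bijection for (i, n) in [n]
    have S1 := H n i n h3 (by omega) (le_refl n) (Or.inr rfl)
    unfold TwoSegalMapBij at S1
    have compat2 : res X (interval i 1 (by omega)) A' = res X (ends (n-i)) c := by
      calc res X (interval i 1 (by omega)) A'
          = res X (g2.comp (interval i 1 (by omega))) a := by rw [hA', res_res]
        _ = res X (g1.comp (ends ((n-i)-(j-i)+1))) a := res_congr X E3 a
        _ = res X (ends ((n-i)-(j-i)+1)) A := by rw [hA, res_res]
        _ = res X (ends ((n-i)-(j-i)+1))
              (res X (outer 0 (j-i) (by omega) (by omega)) c) :=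
            congrArg _ hc1.symm
        _ = res X ((outer 0 (j-i) (by omega) (by omega)).comp
              (ends ((n-i)-(j-i)+1))) c := res_res X _ _ c
        _ = res X (ends (n-i)) c := res_congr X E2 c
    obtain ⟨x, ⟨hx1, hx2⟩, hxu⟩ := S1 A' c compat2
    -- x is the required simplex
    have hxb : res X (interval i (j-i) (by omega)) x = b := by
      calc res X (interval i (j-i) (by omega)) x
          = res X ((interval i (n-i) (by omega)).comp (interval 0 (j-i) (by omega))) x :=
            (res_congr X E4 x).symm
        _ = res X (interval 0 (j-i) (by omega)) (res X (interval i (n-i) (by omega)) x) :=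
            (res_res X _ _ x).symm
        _ = res X (interval 0 (j-i) (by omega)) c := congrArg _ hx2
        _ = b := hc2
    -- apply the special 2-Segal bijection for (i, n-(j-i)+1) in [n-(j-i)+1]
    have S3 := H (n-(j-i)+1) i (n-(j-i)+1) (by omega) (by omega) (le_refl _) (Or.inr rfl)
    unfold TwoSegalMapBij at S3
    set A2 := res X (outer i (n-(j-i)+1) (by omega) (le_refl _)) a with hA2
    set B2 := res X (interval i ((n-(j-i)+1)-i) (by omega)) a with hB2
    have compat3 : res X (interval i 1 (by omega)) A2
        = res X (ends ((n-(j-i)+1)-i)) B2 := by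
      calc res X (interval i 1 (by omega)) A2
          = res X ((outer i (n-(j-i)+1) (by omega) (le_refl _)).comp
              (interval i 1 (by omega))) a := by rw [hA2, res_res]
        _ = res X ((interval i ((n-(j-i)+1)-i) (by omega)).comp
              (ends ((n-(j-i)+1)-i))) a := res_congr X E5 a
        _ = res X (ends ((n-(j-i)+1)-i)) B2 := by rw [hB2, res_res]
    obtain ⟨y, -, hyu⟩ := S3 A2 B2 compat3
    have ha2 : a = y := hyu a ⟨hA2.symm, hB2.symm⟩
    have claimA : res X (outer i (n-(j-i)+1) (by omega) (le_refl _))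
        (res X (outer i j hij hj) x) = A2 := by
      calc res X (outer i (n-(j-i)+1) (by omega) (le_refl _))
            (res X (outer i j hij hj) x)
          = res X ((outer i j hij hj).comp
              (outer i (n-(j-i)+1) (by omega) (le_refl _))) x := res_res X _ _ x
        _ = res X ((outer i n (by omega) (le_refl n)).comp rho) x := res_congr X E6 x
        _ = res X rho (res X (outer i n (by omega) (le_refl n)) x) :=
            (res_res X _ _ x).symm
        _ = res X rho A' := congrArg _ hx1
        _ = res X (g2.comp rho) a := by rw [hA', res_res]
        _ = res X (outer i (n-(j-i)+1) (by omega) (le_refl _)) a := res_congr X E7 a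
        _ = A2 := hA2.symm
    have claimB : res X (interval i ((n-(j-i)+1)-i) (by omega))
        (res X (outer i j hij hj) x) = B2 := by
      calc res X (interval i ((n-(j-i)+1)-i) (by omega)) (res X (outer i j hij hj) x)
          = res X ((outer i j hij hj).comp
              (interval i ((n-(j-i)+1)-i) (by omega))) x := res_res X _ _ x
        _ = res X ((interval i (n-i) (by omega)).comp sig) x := res_congr X E8 x
        _ = res X sig (res X (interval i (n-i) (by omega)) x) := (res_res X _ _ x).symm
        _ = res X sig c := congrArg _ hx2
        _ = res X ((outer 0 (j-i) (by omega) (by omega)).comp rho2) c := res_congr X E9 c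
        _ = res X rho2 (res X (outer 0 (j-i) (by omega) (by omega)) c) :=
            (res_res X _ _ c).symm
        _ = res X rho2 A := congrArg _ hc1
        _ = res X (g1.comp rho2) a := by rw [hA, res_res]
        _ = res X (interval i ((n-(j-i)+1)-i) (by omega)) a := res_congr X E10 a
        _ = B2 := hB2.symm
    have hxa : res X (outer i j hij hj) x = a :=
      (hyu _ ⟨claimA, claimB⟩).trans ha2.symm
    refine ⟨x, ⟨hxa, hxb⟩, ?_⟩
    rintro y' ⟨hy1, hy2⟩
    have hyA : res X (outer i n (by omega) (le_refl n)) y' = A' := by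
      calc res X (outer i n (by omega) (le_refl n)) y'
          = res X ((outer i j hij hj).comp g2) y' := (res_congr X E11 y').symm
        _ = res X g2 (res X (outer i j hij hj) y') := (res_res X _ _ y').symm
        _ = res X g2 a := congrArg _ hy1
        _ = A' := hA'.symm
    have hyc1 : res X (outer 0 (j-i) (by omega) (by omega))
        (res X (interval i (n-i) (by omega)) y') = A := by
      calc res X (outer 0 (j-i) (by omega) (by omega))
            (res X (interval i (n-i) (by omega)) y')
          = res X ((interval i (n-i) (by omega)).comp
              (outer 0 (j-i) (by omega) (by omega))) y' := res_res X _ _ y'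
        _ = res X ((outer i j hij hj).comp g1) y' := res_congr X E12 y'
        _ = res X g1 (res X (outer i j hij hj) y') := (res_res X _ _ y').symm
        _ = res X g1 a := congrArg _ hy1
        _ = A := hA.symm
    have hyc2 : res X (interval 0 (j-i) (by omega))
        (res X (interval i (n-i) (by omega)) y') = b := by
      calc res X (interval 0 (j-i) (by omega))
            (res X (interval i (n-i) (by omega)) y')
          = res X ((interval i (n-i) (by omega)).comp (interval 0 (j-i) (by omega))) y' :=
            res_res X _ _ y'
        _ = res X (interval i (j-i) (by omega)) y' := res_congr X E4 y'
        _ = b := hy2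
    have hyc : res X (interval i (n-i) (by omega)) y' = c := hcu _ ⟨hyc1, hyc2⟩
    exact hxu y' ⟨hyA, hyc⟩

end Seg
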